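/- The Gauss word ABACDCBD is not homotopic to the empty word. -/

import Mathlib

/-- canonical pattern of a word: each letter replaced by index of first occurrence -/
def canon (l : List ℕ) : List ℕ := l.map (fun a => List.idxOf a l)

/-- canonical forms of the six magic Gauss words -/
def T : List (List ℕ) :=
  [[0, 1, 0, 3, 4, 3, 1, 4], [0, 1, 2, 0, 2, 5, 1, 5], [0, 1, 2, 0, 4, 1, 4, 2],
   [0, 1, 2, 1, 4, 0, 2, 4], [0, 1, 2, 3, 1, 3, 0, 2], [0, 1, 2, 3, 2, 0, 3, 1]]

def I (s : List ℕ) : ZMod 2 := if canon s ∈ T then 1 else 0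

def G (l : List ℕ) (P : List ℕ → ZMod 2) : ZMod 2 := (l.sublists.map P).sum

def phi (l : List ℕ) : ZMod 2 := G l I

lemma indexOf_map_injOn {f : ℕ → ℕ} :
    ∀ {l : List ℕ} {a : ℕ}, a ∈ l → (∀ x ∈ l, ∀ y ∈ l, f x = f y → x = y) →
      List.idxOf (f a) (l.map f) = List.idxOf a l := by
  intro l
  induction l with
  | nil => intro a ha; simp at ha
  | cons b tl ih =>
    intro a ha hinj
    by_cases hba : b = a
    · subst hba; simp [List.idxOf_cons_self]
    · have hfba : f b ≠ f a := fun h => hba (hinj b (by simp) a ha h)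
      have ha' : a ∈ tl := (List.mem_cons.mp ha).resolve_left (fun h => hba h.symm)
      rw [List.map_cons, List.idxOf_cons_ne _ hfba, List.idxOf_cons_ne _ hba,
        ih ha' (fun x hx y hy => hinj x (by simp [hx]) y (by simp [hy]))]

lemma count_map_injOn {f : ℕ → ℕ} :
    ∀ {l : List ℕ} {a : ℕ}, a ∈ l → (∀ x ∈ l, ∀ y ∈ l, f x = f y → x = y) →
      List.count (f a) (l.map f) = List.count a l := by
  intro l
  induction l with
  | nil => intro a ha; simp at ha
  | cons b tl ih =>
    intro a ha hinj
    have htl : ∀ x ∈ tl, ∀ y ∈ tl, f x = f y → x = y :=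
      fun x hx y hy => hinj x (by simp [hx]) y (by simp [hy])
    by_cases hba : b = a
    · subst hba
      by_cases hb : b ∈ tl
      · rw [List.map_cons, List.count_cons, List.count_cons, ih hb htl]; simp
      · rw [List.map_cons, List.count_cons, List.count_cons]
        have h1 : List.count b tl = 0 := List.count_eq_zero_of_not_mem hb
        have h2 : List.count (f b) (tl.map f) = 0 := by
          apply List.count_eq_zero_of_not_mem
          intro hmem
          rcases List.mem_map.mp hmem with ⟨c, hc, hfc⟩
          exact hb (hinj c (by simp [hc]) b (by simp) hfc ▸ hc)
        simp [h1, h2]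
    · have hfba : f b ≠ f a := fun h => hba (hinj b (by simp) a ha h)
      have ha' : a ∈ tl := (List.mem_cons.mp ha).resolve_left (fun h => hba h.symm)
      rw [List.map_cons, List.count_cons, List.count_cons, ih ha' htl]
      simp [hba, hfba]

lemma canon_map_injOn {f : ℕ → ℕ} {l : List ℕ}
    (hinj : ∀ x ∈ l, ∀ y ∈ l, f x = f y → x = y) : canon (l.map f) = canon l := by
  unfold canon
  rw [List.map_map]
  apply List.map_congr_left
  intro a ha
  exact indexOf_map_injOn ha hinj

lemma I_map_injOn {f : ℕ → ℕ} {l : List ℕ}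
    (hinj : ∀ x ∈ l, ∀ y ∈ l, f x = f y → x = y) : I (l.map f) = I l := by
  unfold I; rw [canon_map_injOn hinj]

lemma canon_idem (l : List ℕ) : canon (canon l) = canon l :=
  canon_map_injOn (fun x hx y hy h => (List.idxOf_inj hx).mp h)

lemma I_ne_zero {s : List ℕ} (h : I s ≠ 0) : canon s ∈ T := by
  unfold I at h
  by_cases hc : canon s ∈ T
  · exact hc
  · rw [if_neg hc] at h; exact absurd rfl h

lemma I_len {s : List ℕ} (h : s.length ≠ 8) : I s = 0 := by
  by_contra hne
  have hc := I_ne_zero hne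
  have hlen : (canon s).length = s.length := List.length_map _
  have : ∀ w ∈ T, w.length = 8 := by decide
  exact h (hlen ▸ this _ hc)

lemma I_count1 {s : List ℕ} {a : ℕ} (h : s.count a = 1) : I s = 0 := by
  by_contra hne
  have hc := I_ne_zero hne
  have ha : a ∈ s := List.count_pos_iff.mp (by omega)
  have hinj : ∀ x ∈ s, ∀ y ∈ s, List.idxOf x s = List.idxOf y s → x = y :=
    fun x hx y hy hh => (List.idxOf_inj hx).mp hh
  have hcnt : List.count (List.idxOf a s) (canon s) = s.count a :=
    count_map_injOn (f := fun a => List.idxOf a s) ha hinj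
  have hmem : List.idxOf a s ∈ canon s := List.mem_map.mpr ⟨a, ha, rfl⟩
  have h2 : ∀ w ∈ T, ∀ v ∈ w, w.count v = 2 := by decide
  have := h2 _ hc _ hmem
  rw [hcnt, h] at this
  exact absurd this (by norm_num)

lemma I_adj (u v : List ℕ) (a : ℕ) : I (u ++ a :: a :: v) = 0 := by
  by_contra hne
  have hc := I_ne_zero hne
  have hch : ∀ w ∈ T, List.IsChain (· ≠ ·) w := by
    norm_num [T, List.isChain_cons_cons]
  have := hch _ hc
  rw [show canon (u ++ a :: a :: v) =
      (u.map fun x => List.idxOf x (u ++ a :: a :: v)) ++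
      (List.idxOf a (u ++ a :: a :: v)) :: (List.idxOf a (u ++ a :: a :: v)) ::
      (v.map fun x => List.idxOf x (u ++ a :: a :: v)) from by simp [canon]] at this
  rcases List.isChain_append.mp this with ⟨-, h2, -⟩
  exact (List.isChain_cons_cons.mp h2).1 rfl

-- G lemmas
lemma G_nil (P : List ℕ → ZMod 2) : G [] P = P [] := by simp [G]

lemma G_cons (a : ℕ) (l : List ℕ) (P : List ℕ → ZMod 2) :
    G (a :: l) P = G l P + G l (fun s => P (a :: s)) := by
  unfold G
  rw [List.sublists_cons]
  simp only [List.bind_eq_flatMap, List.flatMap_def, List.map_flatten, List.sum_flatten,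
    List.map_map]
  show (List.map (fun x => P x + (P (a :: x) + 0)) l.sublists).sum = _
  rw [show (fun x => P x + (P (a :: x) + 0)) = fun x => P x + P (a :: x) from by
    funext x; ring]
  exact List.sum_map_add

lemma G_append (a b : List ℕ) (P : List ℕ → ZMod 2) :
    G (a ++ b) P = G a (fun s => G b (fun t => P (s ++ t))) := by
  induction a generalizing P with
  | nil => simp [G_nil]
  | cons x tl ih =>
    rw [List.cons_append, G_cons, G_cons, ih, ih]
    simp only [List.cons_append]

lemma G_congr {l : List ℕ} {P Q : List ℕ → ZMod 2}
    (h : ∀ s, s.Sublist l → P s = Q s) : G l P = G l Q := by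
  unfold G
  congr 1
  apply List.map_congr_left
  intro s hs
  exact h s (List.mem_sublists.mp hs)

lemma G_add (l : List ℕ) (P Q : List ℕ → ZMod 2) :
    G l (fun s => P s + Q s) = G l P + G l Q := List.sum_map_add

lemma G_zero (l : List ℕ) : G l (fun _ => (0 : ZMod 2)) = 0 := by simp [G]

lemma G_pair (a b : ℕ) (P : List ℕ → ZMod 2) :
    G [a, b] P = ((P [] + P [a]) + P [b]) + P [a, b] := by
  show (List.map P [[], [a], [b], [a, b]]).sum = _
  simp [List.sum_cons]; ring

lemma G_mapf (f : ℕ → ℕ) (l : List ℕ) (P : List ℕ → ZMod 2) :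
    G (l.map f) P = G l (fun s => P (s.map f)) := by
  unfold G
  rw [List.sublists_map, List.map_map]
  rfl


/-- A Gauss word: every letter that occurs, occurs exactly twice. -/
def IsGauss (w : List ℕ) : Prop := ∀ a ∈ w, w.count a = 2

/-- Rank of a word: the number of distinct letters occurring in it. -/
def rank (w : List ℕ) : ℕ := w.dedup.length

/-- Two words are isomorphic if one is obtained from the other by an
injective (hence bijective onto its image) relabeling of letters. -/
def Isomorphic (w₁ w₂ : List ℕ) : Prop :=
  ∃ f : ℕ → ℕ, Function.Injective f ∧ w₂ = w₁.map f

/-- One step: an isomorphism or a homotopy move H1, H2, H3. -/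
inductive Move : List ℕ → List ℕ → Prop
  | iso {w₁ w₂ : List ℕ} : Isomorphic w₁ w₂ → Move w₁ w₂
  | h1 (x y : List ℕ) (A : ℕ) (hA : A ∉ x ++ y) :
      Move (x ++ [A, A] ++ y) (x ++ y)
  | h2 (x y z : List ℕ) (A B : ℕ) (hAB : A ≠ B)
      (hA : A ∉ x ++ y ++ z) (hB : B ∉ x ++ y ++ z) :
      Move (x ++ [A, B] ++ y ++ [B, A] ++ z) (x ++ y ++ z)
  | h3 (x y z t : List ℕ) (A B C : ℕ)
      (hAB : A ≠ B) (hAC : A ≠ C) (hBC : B ≠ C)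
      (hA : A ∉ x ++ y ++ z ++ t) (hB : B ∉ x ++ y ++ z ++ t)
      (hC : C ∉ x ++ y ++ z ++ t) :
      Move (x ++ [A, B] ++ y ++ [A, C] ++ z ++ [B, C] ++ t)
           (x ++ [B, A] ++ y ++ [C, A] ++ z ++ [C, B] ++ t)

/-- Homotopy: the equivalence relation generated by isomorphisms and H1–H3. -/
def Homotopic : List ℕ → List ℕ → Prop := Relation.EqvGen Move

-- PART 2: enumeration and transport lemmas

def allW : ℕ → List (List ℕ)
  | 0 => [[]]
  | n+1 => (allW n).flatMap fun w => (List.range 4).map fun a => a :: w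

lemma mem_allW : ∀ (n : ℕ) (w : List ℕ), w.length = n → (∀ v ∈ w, v < 4) → w ∈ allW n := by
  intro n
  induction n with
  | zero => intro w hw _; rw [List.length_eq_zero_iff.mp hw]; exact List.mem_singleton.mpr rfl
  | succ n ih =>
    intro w hw hlt
    match w with
    | [] => simp at hw
    | a :: w' =>
      show a :: w' ∈ (allW n).flatMap _
      refine List.mem_flatMap.mpr ⟨w', ih w' (by simpa using hw) (fun v hv => hlt v (by simp [hv])), ?_⟩
      exact List.mem_map.mpr ⟨a, List.mem_range.mpr (hlt a (by simp)), rfl⟩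

def allSplits3 (n : ℕ) : List (List ℕ × List ℕ × List ℕ) :=
  ((allW n).filter fun w => canon w == w).flatMap fun w =>
    (List.range (n+1)).flatMap fun i => (List.range (n+1)).map fun j =>
      (w.take i, (w.drop i).take j, (w.drop i).drop j)

def allSplits4 (n : ℕ) : List (List ℕ × List ℕ × List ℕ × List ℕ) :=
  ((allW n).filter fun w => canon w == w).flatMap fun w =>
    (List.range (n+1)).flatMap fun i => (List.range (n+1)).flatMap fun j =>
      (List.range (n+1)).map fun k =>
        (w.take i, (w.drop i).take j, ((w.drop i).drop j).take k, ((w.drop i).drop j).drop k)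

lemma mem_allSplits3 {n : ℕ} {t1 t2 t3 : List ℕ}
    (hcan : canon (t1 ++ (t2 ++ t3)) = t1 ++ (t2 ++ t3))
    (hlt : ∀ v ∈ t1 ++ (t2 ++ t3), v < 4)
    (hlen : (t1 ++ (t2 ++ t3)).length = n) :
    (t1, t2, t3) ∈ allSplits3 n := by
  have hwmem : (t1 ++ (t2 ++ t3)) ∈ (allW n).filter fun w => canon w == w :=
    List.mem_filter.mpr ⟨mem_allW n _ hlen hlt, beq_iff_eq.mpr hcan⟩
  refine List.mem_flatMap.mpr ⟨_, hwmem, ?_⟩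
  have hi : t1.length < n + 1 := by simp [List.length_append] at hlen; omega
  have hj : t2.length < n + 1 := by simp [List.length_append] at hlen; omega
  refine List.mem_flatMap.mpr ⟨t1.length, List.mem_range.mpr hi, ?_⟩
  refine List.mem_map.mpr ⟨t2.length, List.mem_range.mpr hj, ?_⟩
  rw [List.take_left, List.drop_left, List.take_left, List.drop_left]

lemma mem_allSplits4 {n : ℕ} {t1 t2 t3 t4 : List ℕ}
    (hcan : canon (t1 ++ (t2 ++ (t3 ++ t4))) = t1 ++ (t2 ++ (t3 ++ t4)))
    (hlt : ∀ v ∈ t1 ++ (t2 ++ (t3 ++ t4)), v < 4)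
    (hlen : (t1 ++ (t2 ++ (t3 ++ t4))).length = n) :
    (t1, t2, t3, t4) ∈ allSplits4 n := by
  have hwmem : (t1 ++ (t2 ++ (t3 ++ t4))) ∈ (allW n).filter fun w => canon w == w :=
    List.mem_filter.mpr ⟨mem_allW n _ hlen hlt, beq_iff_eq.mpr hcan⟩
  refine List.mem_flatMap.mpr ⟨_, hwmem, ?_⟩
  have hi : t1.length < n + 1 := by simp [List.length_append] at hlen; omega
  have hj : t2.length < n + 1 := by simp [List.length_append] at hlen; omega
  have hk : t3.length < n + 1 := by simp [List.length_append] at hlen; omega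
  refine List.mem_flatMap.mpr ⟨t1.length, List.mem_range.mpr hi, ?_⟩
  refine List.mem_flatMap.mpr ⟨t2.length, List.mem_range.mpr hj, ?_⟩
  refine List.mem_map.mpr ⟨t3.length, List.mem_range.mpr hk, ?_⟩
  rw [List.take_left, List.drop_left, List.take_left, List.drop_left,
    List.take_left, List.drop_left]

/-- the canonicalizing relabeling -/
def fmap (A B C : ℕ) (c : List ℕ) : ℕ → ℕ := fun v =>
  if v = A then 4 else if v = B then 5 else if v = C then 6 else List.idxOf v c

lemma fmap_mem {A B C : ℕ} {c : List ℕ} (hA : A ∉ c) (hB : B ∉ c) (hC : C ∉ c) :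
    ∀ x ∈ c, fmap A B C c x = List.idxOf x c := by
  intro x hx
  unfold fmap
  rw [if_neg (fun h : x = A => hA (h ▸ hx)), if_neg (fun h : x = B => hB (h ▸ hx)),
    if_neg (fun h : x = C => hC (h ▸ hx))]

lemma fmap_injOn {A B C : ℕ} (hAB : A ≠ B) (hAC : A ≠ C) (hBC : B ≠ C) {c : List ℕ}
    (hlen : c.length ≤ 4) (hA : A ∉ c) (hB : B ∉ c) (hC : C ∉ c) :
    ∀ x, (x = A ∨ x = B ∨ x = C ∨ x ∈ c) → ∀ y, (y = A ∨ y = B ∨ y = C ∨ y ∈ c) →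
      fmap A B C c x = fmap A B C c y → x = y := by
  have key : ∀ x ∈ c, fmap A B C c x < 4 := fun x hx => by
    rw [fmap_mem hA hB hC x hx]
    exact lt_of_lt_of_le (List.idxOf_lt_length_iff.mpr hx) hlen
  have hvA : fmap A B C c A = 4 := by simp [fmap]
  have hvB : fmap A B C c B = 5 := by simp [fmap, hAB.symm]
  have hvC : fmap A B C c C = 6 := by simp [fmap, hAC.symm, hBC.symm]
  intro x hx y hy hf
  rcases hx with rfl | rfl | rfl | hx <;> rcases hy with rfl | rfl | rfl | hy
  · rfl
  · rw [hvA, hvB] at hf; omega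
  · rw [hvA, hvC] at hf; omega
  · rw [hvA] at hf; have := key y hy; omega
  · rw [hvB, hvA] at hf; omega
  · rfl
  · rw [hvB, hvC] at hf; omega
  · rw [hvB] at hf; have := key y hy; omega
  · rw [hvC, hvA] at hf; omega
  · rw [hvC, hvB] at hf; omega
  · rfl
  · rw [hvC] at hf; have := key y hy; omega
  · rw [hvA] at hf; have := key x hx; omega
  · rw [hvB] at hf; have := key x hx; omega
  · rw [hvC] at hf; have := key x hx; omega
  · rw [fmap_mem hA hB hC x hx, fmap_mem hA hB hC y hy] at hf
    exact (List.idxOf_inj hx).mp hf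
-- PART 3: decided enumeration lemmas

def RGS (n : ℕ) : List (List ℕ) := (allW n).filter fun w => canon w == w

lemma mem_RGS {n : ℕ} {w : List ℕ} (hlen : w.length = n) (hlt : ∀ v ∈ w, v < 4)
    (hcan : canon w = w) : w ∈ RGS n :=
  List.mem_filter.mpr ⟨mem_allW n _ hlen hlt, beq_iff_eq.mpr hcan⟩

set_option maxRecDepth 10000 in
lemma E2c : ∀ w ∈ RGS 4, ∀ i ∈ List.range 5, ∀ j ∈ List.range (5-i),
    I (w.take i ++ 4 :: 5 :: ((w.drop i).take j ++ 5 :: 4 :: (w.drop i).drop j)) = 0 := by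
  decide

set_option maxRecDepth 10000 in
lemma E3allc : ∀ w ∈ RGS 2, ∀ i ∈ List.range 3, ∀ j ∈ List.range (3-i), ∀ k ∈ List.range (3-i-j),
    I (w.take i ++ 4 :: 5 :: ((w.drop i).take j ++ 4 :: 6 ::
      (((w.drop i).drop j).take k ++ 5 :: 6 :: ((w.drop i).drop j).drop k)))
    = I (w.take i ++ 5 :: 4 :: ((w.drop i).take j ++ 6 :: 4 ::
      (((w.drop i).drop j).take k ++ 6 :: 5 :: ((w.drop i).drop j).drop k))) := by
  decide

set_option maxRecDepth 100000 in
set_option maxHeartbeats 4000000 in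
lemma E3pairc : ∀ w ∈ RGS 4, ∀ i ∈ List.range 5, ∀ j ∈ List.range (5-i), ∀ k ∈ List.range (5-i-j),
    I (w.take i ++ 4 :: 5 :: ((w.drop i).take j ++ 4 ::
      (((w.drop i).drop j).take k ++ 5 :: ((w.drop i).drop j).drop k)))
    + I (w.take i ++ 4 :: ((w.drop i).take j ++ 4 :: 6 ::
      (((w.drop i).drop j).take k ++ 6 :: ((w.drop i).drop j).drop k)))
    + I (w.take i ++ 5 :: ((w.drop i).take j ++ 6 ::
      (((w.drop i).drop j).take k ++ 5 :: 6 :: ((w.drop i).drop j).drop k)))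
    = I (w.take i ++ 5 :: 4 :: ((w.drop i).take j ++ 4 ::
      (((w.drop i).drop j).take k ++ 5 :: ((w.drop i).drop j).drop k)))
    + I (w.take i ++ 4 :: ((w.drop i).take j ++ 6 :: 4 ::
      (((w.drop i).drop j).take k ++ 6 :: ((w.drop i).drop j).drop k)))
    + I (w.take i ++ 5 :: ((w.drop i).take j ++ 6 ::
      (((w.drop i).drop j).take k ++ 6 :: 5 :: ((w.drop i).drop j).drop k))) := by
  decide
-- PART 4: transport lemmas

lemma canon_lt {c : List ℕ} : ∀ v ∈ canon c, v < c.length := by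
  intro v hv
  rcases List.mem_map.mp hv with ⟨a, ha, rfl⟩
  exact List.idxOf_lt_length_iff.mpr ha

lemma fresh_exists (A B : ℕ) (c : List ℕ) : ∃ C, C ≠ A ∧ C ≠ B ∧ C ∉ c := by
  refine ⟨A + B + c.sum + 1, by omega, by omega, fun hmem => ?_⟩
  have := List.single_le_sum (l := c) (fun x _ => Nat.zero_le x) _ hmem
  omega

lemma E2full {A B : ℕ} (hAB : A ≠ B) (s1 s2 s3 : List ℕ)
    (hA1 : A ∉ s1) (hA2 : A ∉ s2) (hA3 : A ∉ s3)
    (hB1 : B ∉ s1) (hB2 : B ∉ s2) (hB3 : B ∉ s3) :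
    I (s1 ++ A :: B :: (s2 ++ B :: A :: s3)) = 0 := by
  by_cases hn : s1.length + s2.length + s3.length = 4
  case neg =>
    apply I_len
    simp only [List.length_append, List.length_cons]
    omega
  case pos =>
    set c : List ℕ := s1 ++ (s2 ++ s3) with hc
    obtain ⟨C, hCA, hCB, hCc⟩ := fresh_exists A B c
    have hA : A ∉ c := by simp [hc, List.mem_append, hA1, hA2, hA3]
    have hB : B ∉ c := by simp [hc, List.mem_append, hB1, hB2, hB3]
    have hclen : c.length = 4 := by simp [hc, List.length_append]; omega
    have hinj := fmap_injOn hAB (Ne.symm hCA) (Ne.symm hCB) hclen.le hA hB hCc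
    set f : ℕ → ℕ := fmap A B C c with hf
    set u : List ℕ := s1 ++ A :: B :: (s2 ++ B :: A :: s3) with hu
    have humem : ∀ x ∈ u, x = A ∨ x = B ∨ x = C ∨ x ∈ c := by
      intro x hx
      simp only [hu, hc, List.mem_append, List.mem_cons] at hx ⊢
      tauto
    have hIu : I (u.map f) = I u :=
      I_map_injOn (fun x hx y hy => hinj x (humem x hx) y (humem y hy))
    rw [← hIu]
    have hfA : f A = 4 := by simp [hf, fmap]
    have hfB : f B = 5 := by simp [hf, fmap, hAB.symm]
    have hmapc : ∀ s : List ℕ, (∀ v ∈ s, v ∈ c) → s.map f = s.map (fun v => List.idxOf v c) :=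
      fun s hs => List.map_congr_left (fun a ha => fmap_mem hA hB hCc a (hs a ha))
    have hm1 : s1.map f = s1.map (fun v => List.idxOf v c) :=
      hmapc s1 (fun v hv => by simp [hc, List.mem_append, hv])
    have hm2 : s2.map f = s2.map (fun v => List.idxOf v c) :=
      hmapc s2 (fun v hv => by simp [hc, List.mem_append, hv])
    have hm3 : s3.map f = s3.map (fun v => List.idxOf v c) :=
      hmapc s3 (fun v hv => by simp [hc, List.mem_append, hv])
    set g : ℕ → ℕ := fun v => List.idxOf v c with hg
    have hmap : u.map f = (s1.map g) ++ 4 :: 5 :: ((s2.map g) ++ 5 :: 4 :: (s3.map g)) := by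
      simp only [hu, List.map_append, List.map_cons, hfA, hfB, hm1, hm2, hm3]
    rw [hmap]
    -- now apply E2c
    have hwq : (s1.map g) ++ ((s2.map g) ++ (s3.map g)) = canon c := by
      simp only [hc, canon, List.map_append]; rfl
    have hrgs : (s1.map g) ++ ((s2.map g) ++ (s3.map g)) ∈ RGS 4 := by
      rw [hwq]
      exact mem_RGS (by rw [canon, List.length_map, hclen])
        (fun v hv => hclen ▸ canon_lt v hv) (canon_idem c)
    have hi : (s1.map g).length < 5 := by simp [List.length_map]; omega
    have hj : (s2.map g).length < 5 - (s1.map g).length := by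
      simp [List.length_map]; omega
    have := E2c _ hrgs _ (List.mem_range.mpr hi) _ (List.mem_range.mpr hj)
    rwa [List.take_left, List.drop_left, List.take_left, List.drop_left] at this
-- PART 5: H3 transport lemmas

set_option maxHeartbeats 1000000 in
lemma E3allfull {A B C : ℕ} (hAB : A ≠ B) (hAC : A ≠ C) (hBC : B ≠ C)
    (s1 s2 s3 s4 : List ℕ)
    (hA1 : A ∉ s1) (hA2 : A ∉ s2) (hA3 : A ∉ s3) (hA4 : A ∉ s4)
    (hB1 : B ∉ s1) (hB2 : B ∉ s2) (hB3 : B ∉ s3) (hB4 : B ∉ s4)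
    (hC1 : C ∉ s1) (hC2 : C ∉ s2) (hC3 : C ∉ s3) (hC4 : C ∉ s4) :
    I (s1 ++ A :: B :: (s2 ++ A :: C :: (s3 ++ B :: C :: s4)))
      = I (s1 ++ B :: A :: (s2 ++ C :: A :: (s3 ++ C :: B :: s4))) := by
  by_cases hn : s1.length + s2.length + s3.length + s4.length = 2
  case neg =>
    rw [I_len (by simp only [List.length_append, List.length_cons]; omega),
      I_len (by simp only [List.length_append, List.length_cons]; omega)]
  case pos =>
    set c : List ℕ := s1 ++ (s2 ++ (s3 ++ s4)) with hc
    have hA : A ∉ c := by simp [hc, List.mem_append, hA1, hA2, hA3, hA4]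
    have hB : B ∉ c := by simp [hc, List.mem_append, hB1, hB2, hB3, hB4]
    have hC : C ∉ c := by simp [hc, List.mem_append, hC1, hC2, hC3, hC4]
    have hclen : c.length = 2 := by simp [hc, List.length_append]; omega
    have hinj := fmap_injOn hAB hAC hBC (by omega) hA hB hC
    set f : ℕ → ℕ := fmap A B C c with hf
    have tr : ∀ u : List ℕ, (∀ x ∈ u, x = A ∨ x = B ∨ x = C ∨ x ∈ c) → I u = I (u.map f) :=
      fun u hu => (I_map_injOn (fun x hx y hy => hinj x (hu x hx) y (hu y hy))).symm
    rw [tr (s1 ++ A :: B :: (s2 ++ A :: C :: (s3 ++ B :: C :: s4)))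
        (by intro x hx; simp only [hc, List.mem_append, List.mem_cons] at hx ⊢; tauto),
      tr (s1 ++ B :: A :: (s2 ++ C :: A :: (s3 ++ C :: B :: s4)))
        (by intro x hx; simp only [hc, List.mem_append, List.mem_cons] at hx ⊢; tauto)]
    have hfA : f A = 4 := by simp [hf, fmap]
    have hfB : f B = 5 := by simp [hf, fmap, hAB.symm]
    have hfC : f C = 6 := by simp [hf, fmap, hAC.symm, hBC.symm]
    set g : ℕ → ℕ := fun v => List.idxOf v c with hg
    have hmapc : ∀ s : List ℕ, (∀ v ∈ s, v ∈ c) → s.map f = s.map g :=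
      fun s hs => List.map_congr_left (fun a ha => fmap_mem hA hB hC a (hs a ha))
    have hm1 : s1.map f = s1.map g := hmapc s1 (fun v hv => by simp [hc, List.mem_append, hv])
    have hm2 : s2.map f = s2.map g := hmapc s2 (fun v hv => by simp [hc, List.mem_append, hv])
    have hm3 : s3.map f = s3.map g := hmapc s3 (fun v hv => by simp [hc, List.mem_append, hv])
    have hm4 : s4.map f = s4.map g := hmapc s4 (fun v hv => by simp [hc, List.mem_append, hv])
    simp only [List.map_append, List.map_cons, hfA, hfB, hfC, hm1, hm2, hm3, hm4]
    have hwq : (s1.map g) ++ ((s2.map g) ++ ((s3.map g) ++ (s4.map g))) = canon c := by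
      simp only [hc, canon, List.map_append]; rfl
    have hrgs : (s1.map g) ++ ((s2.map g) ++ ((s3.map g) ++ (s4.map g))) ∈ RGS 2 := by
      rw [hwq]
      exact mem_RGS (by rw [canon, List.length_map, hclen])
        (fun v hv => by have := canon_lt v hv; omega) (canon_idem c)
    have hi : (s1.map g).length < 3 := by simp [List.length_map]; omega
    have hj : (s2.map g).length < 3 - (s1.map g).length := by simp [List.length_map]; omega
    have hk : (s3.map g).length < 3 - (s1.map g).length - (s2.map g).length := by
      simp [List.length_map]; omega
    have := E3allc _ hrgs _ (List.mem_range.mpr hi) _ (List.mem_range.mpr hj)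
      _ (List.mem_range.mpr hk)
    simpa only [List.take_left, List.drop_left] using this

set_option maxHeartbeats 2000000 in
lemma E3pairfull {A B C : ℕ} (hAB : A ≠ B) (hAC : A ≠ C) (hBC : B ≠ C)
    (s1 s2 s3 s4 : List ℕ)
    (hA1 : A ∉ s1) (hA2 : A ∉ s2) (hA3 : A ∉ s3) (hA4 : A ∉ s4)
    (hB1 : B ∉ s1) (hB2 : B ∉ s2) (hB3 : B ∉ s3) (hB4 : B ∉ s4)
    (hC1 : C ∉ s1) (hC2 : C ∉ s2) (hC3 : C ∉ s3) (hC4 : C ∉ s4) :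
    I (s1 ++ A :: B :: (s2 ++ A :: (s3 ++ B :: s4)))
      + I (s1 ++ A :: (s2 ++ A :: C :: (s3 ++ C :: s4)))
      + I (s1 ++ B :: (s2 ++ C :: (s3 ++ B :: C :: s4)))
    = I (s1 ++ B :: A :: (s2 ++ A :: (s3 ++ B :: s4)))
      + I (s1 ++ A :: (s2 ++ C :: A :: (s3 ++ C :: s4)))
      + I (s1 ++ B :: (s2 ++ C :: (s3 ++ C :: B :: s4))) := by
  by_cases hn : s1.length + s2.length + s3.length + s4.length = 4
  case neg =>
    rw [I_len (by simp only [List.length_append, List.length_cons]; omega),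
      I_len (by simp only [List.length_append, List.length_cons]; omega),
      I_len (by simp only [List.length_append, List.length_cons]; omega),
      I_len (by simp only [List.length_append, List.length_cons]; omega),
      I_len (by simp only [List.length_append, List.length_cons]; omega),
      I_len (by simp only [List.length_append, List.length_cons]; omega)]
  case pos =>
    set c : List ℕ := s1 ++ (s2 ++ (s3 ++ s4)) with hc
    have hA : A ∉ c := by simp [hc, List.mem_append, hA1, hA2, hA3, hA4]
    have hB : B ∉ c := by simp [hc, List.mem_append, hB1, hB2, hB3, hB4]
    have hC : C ∉ c := by simp [hc, List.mem_append, hC1, hC2, hC3, hC4]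
    have hclen : c.length = 4 := by simp [hc, List.length_append]; omega
    have hinj := fmap_injOn hAB hAC hBC hclen.le hA hB hC
    set f : ℕ → ℕ := fmap A B C c with hf
    have tr : ∀ u : List ℕ, (∀ x ∈ u, x = A ∨ x = B ∨ x = C ∨ x ∈ c) → I u = I (u.map f) :=
      fun u hu => (I_map_injOn (fun x hx y hy => hinj x (hu x hx) y (hu y hy))).symm
    rw [tr (s1 ++ A :: B :: (s2 ++ A :: (s3 ++ B :: s4)))
        (by intro x hx; simp only [hc, List.mem_append, List.mem_cons] at hx ⊢; tauto),
      tr (s1 ++ A :: (s2 ++ A :: C :: (s3 ++ C :: s4)))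
        (by intro x hx; simp only [hc, List.mem_append, List.mem_cons] at hx ⊢; tauto),
      tr (s1 ++ B :: (s2 ++ C :: (s3 ++ B :: C :: s4)))
        (by intro x hx; simp only [hc, List.mem_append, List.mem_cons] at hx ⊢; tauto),
      tr (s1 ++ B :: A :: (s2 ++ A :: (s3 ++ B :: s4)))
        (by intro x hx; simp only [hc, List.mem_append, List.mem_cons] at hx ⊢; tauto),
      tr (s1 ++ A :: (s2 ++ C :: A :: (s3 ++ C :: s4)))
        (by intro x hx; simp only [hc, List.mem_append, List.mem_cons] at hx ⊢; tauto),
      tr (s1 ++ B :: (s2 ++ C :: (s3 ++ C :: B :: s4)))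
        (by intro x hx; simp only [hc, List.mem_append, List.mem_cons] at hx ⊢; tauto)]
    have hfA : f A = 4 := by simp [hf, fmap]
    have hfB : f B = 5 := by simp [hf, fmap, hAB.symm]
    have hfC : f C = 6 := by simp [hf, fmap, hAC.symm, hBC.symm]
    set g : ℕ → ℕ := fun v => List.idxOf v c with hg
    have hmapc : ∀ s : List ℕ, (∀ v ∈ s, v ∈ c) → s.map f = s.map g :=
      fun s hs => List.map_congr_left (fun a ha => fmap_mem hA hB hC a (hs a ha))
    have hm1 : s1.map f = s1.map g := hmapc s1 (fun v hv => by simp [hc, List.mem_append, hv])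
    have hm2 : s2.map f = s2.map g := hmapc s2 (fun v hv => by simp [hc, List.mem_append, hv])
    have hm3 : s3.map f = s3.map g := hmapc s3 (fun v hv => by simp [hc, List.mem_append, hv])
    have hm4 : s4.map f = s4.map g := hmapc s4 (fun v hv => by simp [hc, List.mem_append, hv])
    simp only [List.map_append, List.map_cons, hfA, hfB, hfC, hm1, hm2, hm3, hm4]
    have hwq : (s1.map g) ++ ((s2.map g) ++ ((s3.map g) ++ (s4.map g))) = canon c := by
      simp only [hc, canon, List.map_append]; rfl
    have hrgs : (s1.map g) ++ ((s2.map g) ++ ((s3.map g) ++ (s4.map g))) ∈ RGS 4 := by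
      rw [hwq]
      exact mem_RGS (by rw [canon, List.length_map, hclen])
        (fun v hv => by have := canon_lt v hv; omega) (canon_idem c)
    have hi : (s1.map g).length < 5 := by simp [List.length_map]; omega
    have hj : (s2.map g).length < 5 - (s1.map g).length := by simp [List.length_map]; omega
    have hk : (s3.map g).length < 5 - (s1.map g).length - (s2.map g).length := by
      simp [List.length_map]; omega
    have := E3pairc _ hrgs _ (List.mem_range.mpr hi) _ (List.mem_range.mpr hj)
      _ (List.mem_range.mpr hk)
    simpa only [List.take_left, List.drop_left] using this
-- PART 6: move invariance

lemma addself (x : ZMod 2) : x + x = 0 := by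
  fin_cases x <;> rfl

lemma phi_iso {w1 w2 : List ℕ} (h : Isomorphic w1 w2) : phi w1 = phi w2 := by
  obtain ⟨f, hf, rfl⟩ := h
  unfold phi
  rw [G_mapf]
  exact (G_congr fun s _ => I_map_injOn (fun x _ y _ hxy => hf hxy)).symm

lemma phi_h1 (x y : List ℕ) (A : ℕ) : phi (x ++ [A, A] ++ y) = phi (x ++ y) := by
  unfold phi
  rw [List.append_assoc, G_append x, G_append x]
  apply G_congr
  intro s1 _
  rw [G_append [A, A] y, G_pair]
  simp only [List.nil_append, List.cons_append, List.singleton_append]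
  have hz : G y (fun t => I (s1 ++ A :: A :: t)) = 0 := by
    rw [show (fun t => I (s1 ++ A :: A :: t)) = (fun _ => (0 : ZMod 2)) from
      funext fun t => I_adj s1 t A]
    exact G_zero y
  rw [hz]
  have h2 : G y (fun t => I (s1 ++ A :: t)) + G y (fun t => I (s1 ++ A :: t)) = 0 :=
    addself _
  linear_combination h2
-- PART 7: H2 invariance
set_option maxHeartbeats 1000000 in
lemma phi_h2 (x y z : List ℕ) (A B : ℕ) (hAB : A ≠ B)
    (hA : A ∉ x ++ y ++ z) (hB : B ∉ x ++ y ++ z) :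
    phi (x ++ [A, B] ++ y ++ [B, A] ++ z) = phi (x ++ y ++ z) := by
  have hAx : A ∉ x := fun h => hA (by simp [h])
  have hAy : A ∉ y := fun h => hA (by simp [h])
  have hAz : A ∉ z := fun h => hA (by simp [h])
  have hBx : B ∉ x := fun h => hB (by simp [h])
  have hBy : B ∉ y := fun h => hB (by simp [h])
  have hBz : B ∉ z := fun h => hB (by simp [h])
  unfold phi
  simp only [List.append_assoc]
  simp only [G_append, G_cons, ← G_add, List.nil_append, List.cons_append,
    List.singleton_append]
  apply G_congr; intro s1 hs1
  apply G_congr; intro s2 hs2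
  apply G_congr; intro s3 hs3
  have hA1 : A ∉ s1 := fun h => hAx (hs1.subset h)
  have hA2 : A ∉ s2 := fun h => hAy (hs2.subset h)
  have hA3 : A ∉ s3 := fun h => hAz (hs3.subset h)
  have hB1 : B ∉ s1 := fun h => hBx (hs1.subset h)
  have hB2 : B ∉ s2 := fun h => hBy (hs2.subset h)
  have hB3 : B ∉ s3 := fun h => hBz (hs3.subset h)
  have kA : ∀ s : List ℕ, List.count A s = 1 → I s = 0 := fun _ h => I_count1 h
  have kB : ∀ s : List ℕ, List.count B s = 1 → I s = 0 := fun _ h => I_count1 h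
  have cA1 : List.count A s1 = 0 := List.count_eq_zero_of_not_mem hA1
  have cA2 : List.count A s2 = 0 := List.count_eq_zero_of_not_mem hA2
  have cA3 : List.count A s3 = 0 := List.count_eq_zero_of_not_mem hA3
  have cB1 : List.count B s1 = 0 := List.count_eq_zero_of_not_mem hB1
  have cB2 : List.count B s2 = 0 := List.count_eq_zero_of_not_mem hB2
  have cB3 : List.count B s3 = 0 := List.count_eq_zero_of_not_mem hB3
  simp (disch := simp [List.count_append, List.count_cons, cA1, cA2, cA3,
      cB1, cB2, cB3, hAB, Ne.symm hAB]) only [kA, kB, add_zero, zero_add]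
  rw [E2full hAB s1 s2 s3 hA1 hA2 hA3 hB1 hB2 hB3]
  have hmapid : ∀ s : List ℕ, A ∉ s → B ∉ s → s.map (⇑(Equiv.swap A B)) = s := by
    intro s h1 h2
    rw [show s.map (⇑(Equiv.swap A B)) = s.map id from
      List.map_congr_left fun v hv =>
        Equiv.swap_apply_of_ne_of_ne (fun e => h1 (e ▸ hv)) (fun e => h2 (e ▸ hv)),
      List.map_id]
  have hswap : I (s1 ++ A :: (s2 ++ A :: s3)) = I (s1 ++ B :: (s2 ++ B :: s3)) := by
    have := I_map_injOn (l := s1 ++ B :: (s2 ++ B :: s3)) (f := ⇑(Equiv.swap A B))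
      (fun x _ y _ h => (Equiv.swap A B).injective h)
    rw [List.map_append, List.map_cons, List.map_append, List.map_cons,
      hmapid s1 hA1 hB1, hmapid s2 hA2 hB2, hmapid s3 hA3 hB3,
      Equiv.swap_apply_right] at this
    exact this
  rw [hswap]
  linear_combination addself (I (s1 ++ B :: (s2 ++ B :: s3)))
-- PART 8: H3 invariance
set_option maxHeartbeats 2000000 in
lemma phi_h3 (x y z t : List ℕ) (A B C : ℕ) (hAB : A ≠ B) (hAC : A ≠ C) (hBC : B ≠ C)
    (hA : A ∉ x ++ y ++ z ++ t) (hB : B ∉ x ++ y ++ z ++ t) (hC : C ∉ x ++ y ++ z ++ t) :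
    phi (x ++ [A, B] ++ y ++ [A, C] ++ z ++ [B, C] ++ t)
      = phi (x ++ [B, A] ++ y ++ [C, A] ++ z ++ [C, B] ++ t) := by
  have hAx : A ∉ x := fun h => hA (by simp [h])
  have hAy : A ∉ y := fun h => hA (by simp [h])
  have hAz : A ∉ z := fun h => hA (by simp [h])
  have hAt : A ∉ t := fun h => hA (by simp [h])
  have hBx : B ∉ x := fun h => hB (by simp [h])
  have hBy : B ∉ y := fun h => hB (by simp [h])
  have hBz : B ∉ z := fun h => hB (by simp [h])
  have hBt : B ∉ t := fun h => hB (by simp [h])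
  have hCx : C ∉ x := fun h => hC (by simp [h])
  have hCy : C ∉ y := fun h => hC (by simp [h])
  have hCz : C ∉ z := fun h => hC (by simp [h])
  have hCt : C ∉ t := fun h => hC (by simp [h])
  unfold phi
  simp only [List.append_assoc]
  simp only [G_append, G_cons, ← G_add, List.nil_append, List.cons_append,
    List.singleton_append]
  apply G_congr; intro s1 hs1
  apply G_congr; intro s2 hs2
  apply G_congr; intro s3 hs3
  apply G_congr; intro s4 hs4
  have hA1 : A ∉ s1 := fun h => hAx (hs1.subset h)
  have hA2 : A ∉ s2 := fun h => hAy (hs2.subset h)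
  have hA3 : A ∉ s3 := fun h => hAz (hs3.subset h)
  have hA4 : A ∉ s4 := fun h => hAt (hs4.subset h)
  have hB1 : B ∉ s1 := fun h => hBx (hs1.subset h)
  have hB2 : B ∉ s2 := fun h => hBy (hs2.subset h)
  have hB3 : B ∉ s3 := fun h => hBz (hs3.subset h)
  have hB4 : B ∉ s4 := fun h => hBt (hs4.subset h)
  have hC1 : C ∉ s1 := fun h => hCx (hs1.subset h)
  have hC2 : C ∉ s2 := fun h => hCy (hs2.subset h)
  have hC3 : C ∉ s3 := fun h => hCz (hs3.subset h)
  have hC4 : C ∉ s4 := fun h => hCt (hs4.subset h)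
  have kA : ∀ s : List ℕ, List.count A s = 1 → I s = 0 := fun _ h => I_count1 h
  have kB : ∀ s : List ℕ, List.count B s = 1 → I s = 0 := fun _ h => I_count1 h
  have kC : ∀ s : List ℕ, List.count C s = 1 → I s = 0 := fun _ h => I_count1 h
  have cA1 : List.count A s1 = 0 := List.count_eq_zero_of_not_mem hA1
  have cA2 : List.count A s2 = 0 := List.count_eq_zero_of_not_mem hA2
  have cA3 : List.count A s3 = 0 := List.count_eq_zero_of_not_mem hA3
  have cA4 : List.count A s4 = 0 := List.count_eq_zero_of_not_mem hA4
  have cB1 : List.count B s1 = 0 := List.count_eq_zero_of_not_mem hB1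
  have cB2 : List.count B s2 = 0 := List.count_eq_zero_of_not_mem hB2
  have cB3 : List.count B s3 = 0 := List.count_eq_zero_of_not_mem hB3
  have cB4 : List.count B s4 = 0 := List.count_eq_zero_of_not_mem hB4
  have cC1 : List.count C s1 = 0 := List.count_eq_zero_of_not_mem hC1
  have cC2 : List.count C s2 = 0 := List.count_eq_zero_of_not_mem hC2
  have cC3 : List.count C s3 = 0 := List.count_eq_zero_of_not_mem hC3
  have cC4 : List.count C s4 = 0 := List.count_eq_zero_of_not_mem hC4
  simp (disch := simp [List.count_append, List.count_cons, cA1, cA2, cA3, cA4,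
      cB1, cB2, cB3, cB4, cC1, cC2, cC3, cC4, hAB, hAC, hBC,
      Ne.symm hAB, Ne.symm hAC, Ne.symm hBC])
    only [kA, kB, kC, add_zero, zero_add]
  linear_combination
    (E3pairfull hAB hAC hBC s1 s2 s3 s4 hA1 hA2 hA3 hA4 hB1 hB2 hB3 hB4 hC1 hC2 hC3 hC4)
    + (E3allfull hAB hAC hBC s1 s2 s3 s4 hA1 hA2 hA3 hA4 hB1 hB2 hB3 hB4 hC1 hC2 hC3 hC4)
-- PART 9: conclusion

lemma move_phi {a b : List ℕ} (h : Move a b) : phi a = phi b := by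
  cases h with
  | iso h => exact phi_iso h
  | h1 x y A hA => exact phi_h1 x y A
  | h2 x y z A B hAB hA hB => exact phi_h2 x y z A B hAB hA hB
  | h3 x y z t A B C hAB hAC hBC hA hB hC => exact phi_h3 x y z t A B C hAB hAC hBC hA hB hC

lemma homotopic_phi {a b : List ℕ} (h : Homotopic a b) : phi a = phi b := by
  induction h with
  | rel _ _ h => exact move_phi h
  | refl _ => rfl
  | symm _ _ _ ih => exact ih.symm
  | trans _ _ _ _ _ ih1 ih2 => exact ih1.trans ih2
set_option maxRecDepth 40000 in
/-- ABACDCBD (encoded with A,B,C,D as 0,1,2,3) is not homotopic to the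
empty word. -/
theorem abacdcbd_not_null_homotopic :
    ¬ Homotopic [0, 1, 0, 2, 3, 2, 1, 3] [] := by
  intro h
  have h1 : phi [0, 1, 0, 2, 3, 2, 1, 3] = 1 := by decide
  have h2 : phi [] = 0 := by decide
  rw [homotopic_phi h, h2] at h1
  exact absurd h1 (by decide)
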